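/- arXiv:2105.03415 — 2 statements merged into one kernel-verified Lean document; each statement's English description precedes it below -/
import Mathlib

section
/- For every n ≥ 1, every a : ℕ, and every b < 2^n, the n-th iterate of T satisfies T^[n](2^n * a + b) = 3^(m(b,n)) * a + T^[n](b), where m(b,n) is the number of indices k with 0 ≤ k < n such that T^[k](b) is odd. -/
def T (N : ℕ) : ℕ := if N % 2 = 0 then N / 2 else (3 * N + 1) / 2

def m (b n : ℕ) : ℕ := ((Finset.range n).filter (fun k => Odd (T^[k] b))).card

lemma m_succ (b k : ℕ) :
    m b (k + 1) = m b k + (if Odd (T^[k] b) then 1 else 0) := by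
  unfold m
  rw [Finset.range_add_one, Finset.filter_insert]
  split
  · rw [Finset.card_insert_of_notMem (by simp)]
  · simp

lemma key : ∀ k n a b, k ≤ n →
    T^[k] (2 ^ n * a + b) = 2 ^ (n - k) * 3 ^ m b k * a + T^[k] b := by
  intro k
  induction k with
  | zero => intro n a b _; simp [m]
  | succ k ih =>
    intro n a b hk
    have hk' : k ≤ n := Nat.le_of_succ_le hk
    rw [Function.iterate_succ_apply', Function.iterate_succ_apply', ih n a b hk',
      m_succ]
    have hnk : n - k = (n - (k + 1)) + 1 := by omega
    set j := n - (k + 1) with hj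
    set y := T^[k] b with hy
    set q := 2 ^ j * 3 ^ m b k * a with hq
    have h2 : 2 ^ (n - k) * 3 ^ m b k * a = 2 * q := by
      rw [hnk, pow_succ, hq]; ring
    rw [h2]
    unfold T
    rcases Nat.even_or_odd y with he | ho
    · have h0 : y % 2 = 0 := Nat.even_iff.mp he
      have : ¬ Odd y := by simpa [Nat.odd_iff] using h0
      simp only [this, if_false]
      have hmod : (2 * q + y) % 2 = 0 := by omega
      simp only [hmod, h0, if_true, reduceIte]
      rw [show 2 ^ j * 3 ^ (m b k + 0) * a = q by rw [hq]; ring]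
      omega
    · have h1 : y % 2 = 1 := Nat.odd_iff.mp ho
      simp only [ho, if_true]
      have hmod : (2 * q + y) % 2 = 1 := by omega
      simp only [hmod, h1]
      norm_num
      ring_nf
      rw [show a * 2 ^ j * 3 ^ m b k = q by rw [hq]; ring]
      omega

theorem stmt1 : ∀ n ≥ 1, ∀ a : ℕ, ∀ b < 2 ^ n,
    T^[n] (2 ^ n * a + b) = 3 ^ m b n * a + T^[n] b := by
  intro n _ a b _
  have := key n n a b le_rfl
  simpa using this
end

section
/- For every n ≥ 1, the sum of 3^(m(b,n)) over all b with 0 ≤ b < 2^n equals 4^n. -/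
lemma T_even (a : ℕ) : T (2 * a) = a := by unfold T; split <;> omega

lemma T_odd (a : ℕ) : T (2 * a + 1) = 3 * a + 2 := by unfold T; split <;> omega

lemma two_cancel {n a b : ℕ} (h : 2 * a ≡ 2 * b [MOD 2 * n]) : a ≡ b [MOD n] := by
  unfold Nat.ModEq at *
  rw [Nat.mul_mod_mul_left, Nat.mul_mod_mul_left] at h
  omega

lemma Tmod {n x y : ℕ} (h : x ≡ y [MOD 2 * n]) : T x ≡ T y [MOD n] := by
  have hp : x % 2 = y % 2 := Nat.ModEq.of_dvd (dvd_mul_right 2 n) h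
  rcases Nat.even_or_odd x with ⟨a, ha⟩ | ⟨a, ha⟩
  · have hy : y = 2 * (y / 2) := by omega
    have hx : x = 2 * a := by omega
    rw [hx, hy] at h ⊢
    rw [T_even, T_even]
    exact two_cancel h
  · have hx : x = 2 * a + 1 := by omega
    have hy : y = 2 * (y / 2) + 1 := by omega
    rw [hx, hy] at h ⊢
    rw [T_odd, T_odd]
    have h2 : 2 * a ≡ 2 * (y / 2) [MOD 2 * n] := by
      have := Nat.ModEq.add_right_cancel' 1 h
      exact this
    have := two_cancel h2
    exact (this.mul_left 3).add_right 2

lemma parity (k : ℕ) : ∀ x y, x ≡ y [MOD 2 ^ (k + 1)] → (Odd (T^[k] x) ↔ Odd (T^[k] y)) := by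
  induction k with
  | zero =>
    intro x y h
    simp only [Function.iterate_zero, id_eq, Nat.odd_iff]
    unfold Nat.ModEq at h
    rw [pow_one] at h
    rw [h]
  | succ k ih =>
    intro x y h
    rw [Function.iterate_succ_apply, Function.iterate_succ_apply]
    apply ih
    apply Tmod
    have : 2 ^ (k + 1 + 1) = 2 * 2 ^ (k + 1) := by ring
    rwa [this] at h

lemma m_mod {x y : ℕ} (n : ℕ) (h : x ≡ y [MOD 2 ^ n]) : m x n = m y n := by
  unfold m
  congr 1
  apply Finset.filter_congr
  intro k hk
  simp only [Finset.mem_range] at hk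
  have hdvd : (2 : ℕ) ^ (k + 1) ∣ 2 ^ n := pow_dvd_pow 2 (by omega)
  exact parity k x y (Nat.ModEq.of_dvd hdvd h)

lemma pow_m (b n : ℕ) :
    (3 : ℕ) ^ m b n = ∏ k ∈ Finset.range n, (if Odd (T^[k] b) then 3 else 1) := by
  rw [m, ← Finset.prod_filter]
  exact (Finset.prod_const 3).symm

lemma pow_m_succ (b n : ℕ) :
    (3 : ℕ) ^ m b (n + 1) = (if Odd b then 3 else 1) * 3 ^ m (T b) n := by
  rw [pow_m, pow_m, Finset.prod_range_succ']
  simp only [Function.iterate_succ_apply, Function.iterate_zero, id_eq]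
  rw [mul_comm]
  rfl

lemma sum_double (g : ℕ → ℕ) (M : ℕ) :
    ∑ b ∈ Finset.range (2 * M), g b =
      ∑ a ∈ Finset.range M, g (2 * a) + ∑ a ∈ Finset.range M, g (2 * a + 1) := by
  induction M with
  | zero => simp
  | succ M ih =>
    have h : 2 * (M + 1) = (2 * M) + 1 + 1 := by ring
    rw [h, Finset.sum_range_succ, Finset.sum_range_succ, Finset.sum_range_succ,
      Finset.sum_range_succ, ih]
    ring

lemma reindex (n : ℕ) (f : ℕ → ℕ) :
    ∑ a ∈ Finset.range (2 ^ n), f ((3 * a + 2) % 2 ^ n) =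
      ∑ a ∈ Finset.range (2 ^ n), f a := by
  have hinj : Set.InjOn (fun a => (3 * a + 2) % 2 ^ n) (Finset.range (2 ^ n)) := by
    intro a ha b hb hab
    simp only [Finset.coe_range, Set.mem_Iio] at ha hb
    have h1 : 3 * a + 2 ≡ 3 * b + 2 [MOD 2 ^ n] := hab
    have h2 : 3 * a ≡ 3 * b [MOD 2 ^ n] := Nat.ModEq.add_right_cancel' 2 h1
    have hc : Nat.Coprime (2 ^ n) 3 := Nat.Coprime.pow_left n (by decide)
    have h3 : a ≡ b [MOD 2 ^ n] := Nat.ModEq.cancel_left_of_coprime hc h2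
    unfold Nat.ModEq at h3
    rw [Nat.mod_eq_of_lt ha, Nat.mod_eq_of_lt hb] at h3
    exact h3
  have hsub : (Finset.range (2 ^ n)).image (fun a => (3 * a + 2) % 2 ^ n) ⊆
      Finset.range (2 ^ n) := by
    intro x hx
    simp only [Finset.mem_image] at hx
    obtain ⟨a, _, rfl⟩ := hx
    exact Finset.mem_range.mpr (Nat.mod_lt _ (Nat.pow_pos (by norm_num)))
  have himg : (Finset.range (2 ^ n)).image (fun a => (3 * a + 2) % 2 ^ n) =
      Finset.range (2 ^ n) := by
    apply Finset.eq_of_subset_of_card_le hsub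
    rw [Finset.card_image_of_injOn hinj]
  conv_rhs => rw [← himg]
  rw [Finset.sum_image hinj]

lemma main (n : ℕ) : ∑ b ∈ Finset.range (2 ^ n), 3 ^ m b n = 4 ^ n := by
  induction n with
  | zero => simp [m]
  | succ n ih =>
    have h2 : (2 : ℕ) ^ (n + 1) = 2 * 2 ^ n := by ring
    rw [h2]
    calc ∑ b ∈ Finset.range (2 * 2 ^ n), 3 ^ m b (n + 1)
        = ∑ a ∈ Finset.range (2 ^ n), 3 ^ m (2 * a) (n + 1)
          + ∑ a ∈ Finset.range (2 ^ n), 3 ^ m (2 * a + 1) (n + 1) :=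
          sum_double (fun b => 3 ^ m b (n + 1)) (2 ^ n)
      _ = ∑ a ∈ Finset.range (2 ^ n), 3 ^ m a n
          + ∑ a ∈ Finset.range (2 ^ n), 3 * 3 ^ m (3 * a + 2) n := by
          congr 1
          · apply Finset.sum_congr rfl; intro a _
            rw [pow_m_succ, T_even]
            simp [Nat.even_iff, Nat.not_odd_iff_even, parity_simps]
          · apply Finset.sum_congr rfl; intro a _
            rw [pow_m_succ, T_odd]
            simp [Nat.odd_iff]
      _ = 4 ^ n + 3 * 4 ^ n := by
          have e1 : ∑ a ∈ Finset.range (2 ^ n), 3 * 3 ^ m (3 * a + 2) n = 3 * 4 ^ n := by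
            rw [← Finset.mul_sum]
            congr 1
            have : ∀ a, m (3 * a + 2) n = m ((3 * a + 2) % 2 ^ n) n := by
              intro a
              exact m_mod n (Nat.mod_modEq _ _).symm
            calc ∑ a ∈ Finset.range (2 ^ n), 3 ^ m (3 * a + 2) n
                = ∑ a ∈ Finset.range (2 ^ n), 3 ^ m ((3 * a + 2) % 2 ^ n) n := by
                  apply Finset.sum_congr rfl; intro a _; rw [this]
              _ = ∑ a ∈ Finset.range (2 ^ n), 3 ^ m a n :=
                  reindex n (fun x => 3 ^ m x n)
              _ = 4 ^ n := ih
          rw [ih, e1]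
      _ = 4 ^ (n + 1) := by ring

theorem stmt5 : ∀ n ≥ 1, ∑ b ∈ Finset.range (2 ^ n), 3 ^ m b n = 4 ^ n := by
  intro n _
  exact main n
end
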